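/- Let (S,𝒮) be a measurable state space, γ ∈ (0,1), and φ : S → ℝ^d measurable with ‖φ(s)‖ ≤ 1 for all s ∈ S. Let (S_0, S_1) be a random pair such that S_0 and S_1 have the same marginal law μ on S. Set Σ_φ = E[φ(S_0)φ(S_0)ᵀ], assume ν = λ_min(Σ_φ) > 0, and define the random TD(0) matrix A = φ(S_0)(φ(S_0) − γ φ(S_1))ᵀ. Then: (i) ‖A‖ ≤ 1 + γ almost surely; (ii) the matrix-noise covariance Σ_A = E[(A − E[A])(A − E[A])ᵀ] satisfies ‖Σ_A‖ ≤ 2(1+γ)²; and (iii) for every step size η ∈ (0, (1−γ)/4] and every u ∈ ℝ^d, (E[‖(I − ηA)u‖²])^{1/2} ≤ (1 − η(1−γ)ν/2)‖u‖, i.e. TD(0) satisfies the exponential stability assumption with a = (1−γ)ν/2 and η∞ = (1−γ)/4. -/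

import Mathlib

open MeasureTheory
open scoped RealInnerProductSpace

noncomputable section

/-- Euclidean space `ℝ^d`. -/
abbrev Euc (d : ℕ) := EuclideanSpace ℝ (Fin d)

/-- Linear operators on `ℝ^d`, carrying the operator norm. -/
abbrev Op (d : ℕ) := Euc d →L[ℝ] Euc d

/-- Outer product `v wᵀ` as an operator on `ℝ^d`. -/
def outer2 {d : ℕ} (v w : Euc d) : Op d := (innerSL ℝ w).smulRight v

/-- The random TD(0) matrix `A = φ(S₀)(φ(S₀) − γφ(S₁))ᵀ`. -/
def tdMat {d : ℕ} {S Ω : Type} (φ : S → Euc d) (γ : ℝ) (S0 S1 : Ω → S) (ω : Ω) : Op d :=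
  outer2 (φ (S0 ω)) (φ (S0 ω) - γ • φ (S1 ω))

/-- Feature covariance matrix `Σ_φ = E[φ(S₀)φ(S₀)ᵀ]`. -/
def featCov {d : ℕ} {S Ω : Type} [MeasurableSpace Ω] (P : Measure Ω)
    (φ : S → Euc d) (S0 : Ω → S) : Op d :=
  ∫ ω, outer2 (φ (S0 ω)) (φ (S0 ω)) ∂P

/-- Smallest eigenvalue of a (self-adjoint) operator, as the infimum of its Rayleigh quotient
over the unit sphere. -/
def lambdaMin {d : ℕ} (M : Op d) : ℝ :=
  ⨅ u : {u : Euc d // ‖u‖ = 1}, ⟪(u : Euc d), M (u : Euc d)⟫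

lemma outer2_apply {d : ℕ} (v w u : Euc d) : outer2 v w u = ⟪w, u⟫ • v := rfl

lemma norm_outer2_le {d : ℕ} (v w : Euc d) : ‖outer2 v w‖ ≤ ‖v‖ * ‖w‖ := by
  refine ContinuousLinearMap.opNorm_le_bound _ (by positivity) fun u => ?_
  rw [outer2_apply, norm_smul, Real.norm_eq_abs]
  have h1 := abs_real_inner_le_norm w u
  nlinarith [norm_nonneg v, norm_nonneg u, norm_nonneg w, abs_nonneg (⟪w, u⟫)]

lemma continuous_outer2 {d : ℕ} : Continuous fun p : Euc d × Euc d => outer2 p.1 p.2 := by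
  have h : Continuous fun p : Euc d × Euc d =>
      (ContinuousLinearMap.smulRightL ℝ (Euc d) (Euc d) (innerSL ℝ p.2)) p.1 :=
    (continuous_const.clm_apply ((innerSL ℝ).continuous.comp continuous_snd)).clm_apply
      continuous_fst
  exact h

/-- The adjoint map on operators, as a continuous linear map. -/
def adjCLM (d : ℕ) : Op d →L[ℝ] Op d :=
  ⟨{ toFun := fun M => ContinuousLinearMap.adjoint M
     map_add' := fun M N => map_add _ M N
     map_smul' := fun r M => by
       show ContinuousLinearMap.adjoint (r • M) = r • ContinuousLinearMap.adjoint M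
       rw [map_smulₛₗ]; simp }, ContinuousLinearMap.adjoint.continuous⟩

lemma adjCLM_apply {d : ℕ} (M : Op d) : adjCLM d M = ContinuousLinearMap.adjoint M := rfl

lemma norm_adjCLM {d : ℕ} (M : Op d) : ‖adjCLM d M‖ = ‖M‖ :=
  ContinuousLinearMap.adjoint.norm_map M

set_option maxHeartbeats 4000000 in
/-- TD(0) with linear function approximation satisfies the assumptions of
linear stochastic approximation: (i) `‖A‖ ≤ 1 + γ` a.s.; (ii) `‖Σ_A‖ ≤ 2(1+γ)²`;
(iii) exponential stability with `a = (1−γ)ν/2` for all step sizes `η ∈ (0, (1−γ)/4]`. -/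
theorem td0_checks_lsa_assumptions
    (d : ℕ) (hd : 1 ≤ d) (γ : ℝ) (hγ : γ ∈ Set.Ioo (0 : ℝ) 1)
    {S : Type} [MeasurableSpace S]
    {Ω : Type} [MeasurableSpace Ω] (P : Measure Ω) [IsProbabilityMeasure P]
    (μ : Measure S) [IsProbabilityMeasure μ]
    (φ : S → Euc d) (hφmeas : Measurable φ) (hφbd : ∀ s, ‖φ s‖ ≤ 1)
    (S0 S1 : Ω → S) (hS0 : Measurable S0) (hS1 : Measurable S1)
    (hlaw0 : Measure.map S0 P = μ) (hlaw1 : Measure.map S1 P = μ)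
    (ν : ℝ) (hν : ν = lambdaMin (featCov P φ S0)) (hνpos : 0 < ν) :
    (∀ᵐ ω ∂P, ‖tdMat φ γ S0 S1 ω‖ ≤ 1 + γ) ∧
      ‖∫ ω, (tdMat φ γ S0 S1 ω - ∫ ω', tdMat φ γ S0 S1 ω' ∂P).comp
          (ContinuousLinearMap.adjoint
            (tdMat φ γ S0 S1 ω - ∫ ω', tdMat φ γ S0 S1 ω' ∂P)) ∂P‖ ≤ 2 * (1 + γ) ^ 2 ∧
      ∀ η ∈ Set.Ioc (0 : ℝ) ((1 - γ) / 4), ∀ u : Euc d,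
        Real.sqrt (∫ ω, ‖((1 : Op d) - η • tdMat φ γ S0 S1 ω) u‖ ^ 2 ∂P) ≤
          (1 - η * (1 - γ) * ν / 2) * ‖u‖ := by
  obtain ⟨hγ0, hγ1⟩ := hγ
  set A : Ω → Op d := tdMat φ γ S0 S1 with hAdef
  have hwbd : ∀ ω, ‖φ (S0 ω) - γ • φ (S1 ω)‖ ≤ 1 + γ := by
    intro ω
    calc ‖φ (S0 ω) - γ • φ (S1 ω)‖ ≤ ‖φ (S0 ω)‖ + ‖γ • φ (S1 ω)‖ := norm_sub_le _ _
      _ ≤ 1 + γ := by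
          rw [norm_smul, Real.norm_eq_abs, abs_of_pos hγ0]
          have h1 := hφbd (S0 ω); have h2 := hφbd (S1 ω)
          nlinarith
  have hAbd : ∀ ω, ‖A ω‖ ≤ 1 + γ := by
    intro ω
    refine (norm_outer2_le _ _).trans ?_
    have h1 := hφbd (S0 ω); have h2 := hwbd ω
    nlinarith [norm_nonneg (φ (S0 ω)), norm_nonneg (φ (S0 ω) - γ • φ (S1 ω))]
  have hpair : Measurable fun ω => (φ (S0 ω), φ (S1 ω)) :=
    (hφmeas.comp hS0).prodMk (hφmeas.comp hS1)
  have hA_sm : AEStronglyMeasurable A P := by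
    have hc : Continuous fun p : Euc d × Euc d => outer2 p.1 (p.1 - γ • p.2) := by
      have h : Continuous fun p : Euc d × Euc d =>
          (ContinuousLinearMap.smulRightL ℝ (Euc d) (Euc d)
            (innerSL ℝ (p.1 - γ • p.2))) p.1 :=
        (continuous_const.clm_apply ((innerSL ℝ).continuous.comp
          (continuous_fst.sub (continuous_snd.const_smul γ)))).clm_apply continuous_fst
      exact h
    apply hc.comp_aestronglyMeasurable hpair.aestronglyMeasurable
  have hA_int : Integrable A P :=
    Integrable.mono' (integrable_const (1 + γ)) hA_sm (ae_of_all _ hAbd)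
  -- ####### the quadratic form q #######
  set q : Euc d → ℝ := fun u => ∫ ω, ⟪φ (S0 ω), u⟫ ^ 2 ∂P with hqdef
  have hx_sm : ∀ u : Euc d, AEStronglyMeasurable (fun ω => (⟪φ (S0 ω), u⟫ : ℝ)) P :=
    fun u => ((hφmeas.comp hS0).inner measurable_const).aestronglyMeasurable
  have hy_sm : ∀ u : Euc d, AEStronglyMeasurable (fun ω => (⟪φ (S1 ω), u⟫ : ℝ)) P :=
    fun u => ((hφmeas.comp hS1).inner measurable_const).aestronglyMeasurable
  have hxbd : ∀ (u v : Euc d), ‖v‖ ≤ 1 → |⟪v, u⟫| ≤ ‖u‖ := by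
    intro u v hv
    refine (abs_real_inner_le_norm v u).trans ?_
    nlinarith [norm_nonneg u, norm_nonneg v]
  have habs2 : ∀ (r b : ℝ), |r| ≤ b → r ^ 2 ≤ b ^ 2 := by
    intro r b h; nlinarith [abs_nonneg r, sq_abs r, le_abs_self r, neg_abs_le r]
  have hx2_int : ∀ u : Euc d, Integrable (fun ω => (⟪φ (S0 ω), u⟫ : ℝ) ^ 2) P := by
    intro u
    refine Integrable.mono' (integrable_const (‖u‖ ^ 2)) ((hx_sm u).pow 2)
      (ae_of_all _ fun ω => ?_)
    simpa [Real.norm_eq_abs, abs_pow, sq_abs] using habs2 _ _ (hxbd u _ (hφbd (S0 ω)))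
  have hy2_int : ∀ u : Euc d, Integrable (fun ω => (⟪φ (S1 ω), u⟫ : ℝ) ^ 2) P := by
    intro u
    refine Integrable.mono' (integrable_const (‖u‖ ^ 2)) ((hy_sm u).pow 2)
      (ae_of_all _ fun ω => ?_)
    simpa [Real.norm_eq_abs, abs_pow, sq_abs] using habs2 _ _ (hxbd u _ (hφbd (S1 ω)))
  have hg0_sm : AEStronglyMeasurable (fun ω => outer2 (φ (S0 ω)) (φ (S0 ω))) P := by
    have hc : Continuous fun p : Euc d × Euc d => outer2 p.1 p.1 := by
      have h : Continuous fun p : Euc d × Euc d =>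
          (ContinuousLinearMap.smulRightL ℝ (Euc d) (Euc d) (innerSL ℝ p.1)) p.1 :=
        (continuous_const.clm_apply ((innerSL ℝ).continuous.comp
          continuous_fst)).clm_apply continuous_fst
      exact h
    apply hc.comp_aestronglyMeasurable hpair.aestronglyMeasurable
  have hg0_int : Integrable (fun ω => outer2 (φ (S0 ω)) (φ (S0 ω))) P := by
    refine Integrable.mono' (integrable_const 1) hg0_sm (ae_of_all _ fun ω => ?_)
    refine (norm_outer2_le _ _).trans ?_
    have := hφbd (S0 ω); nlinarith [norm_nonneg (φ (S0 ω))]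
  have hq_eq : ∀ u : Euc d, ⟪u, featCov P φ S0 u⟫ = q u := by
    intro u
    have hint : Integrable (fun ω => (⟪φ (S0 ω), u⟫ : ℝ) • φ (S0 ω)) P := by
      refine Integrable.mono' (integrable_const ‖u‖)
        ((hx_sm u).smul (hφmeas.comp hS0).aestronglyMeasurable) (ae_of_all _ fun ω => ?_)
      rw [norm_smul, Real.norm_eq_abs]
      have h1 := hxbd u _ (hφbd (S0 ω)); have h2 := hφbd (S0 ω)
      nlinarith [abs_nonneg (⟪φ (S0 ω), u⟫ : ℝ), norm_nonneg (φ (S0 ω)), norm_nonneg u]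
    have happ : featCov P φ S0 u = ∫ ω, (⟪φ (S0 ω), u⟫ : ℝ) • φ (S0 ω) ∂P := by
      rw [featCov, ContinuousLinearMap.integral_apply hg0_int u]
      exact integral_congr_ae (ae_of_all _ fun ω => rfl)
    have hswap := (innerSL ℝ u).integral_comp_comm hint
    simp only [innerSL_apply_apply] at hswap
    rw [happ, ← hswap]
    refine integral_congr_ae (ae_of_all _ fun ω => ?_)
    show ⟪u, (⟪φ (S0 ω), u⟫ : ℝ) • φ (S0 ω)⟫ = (⟪φ (S0 ω), u⟫ : ℝ) ^ 2
    rw [real_inner_smul_right, real_inner_comm]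
    ring
  have hq_nonneg : ∀ u : Euc d, 0 ≤ q u :=
    fun u => integral_nonneg fun ω => sq_nonneg _
  have hq_ub : ∀ u : Euc d, q u ≤ ‖u‖ ^ 2 := by
    intro u
    have h := integral_mono (hx2_int u) (integrable_const (‖u‖ ^ 2))
      (fun ω => habs2 _ _ (hxbd u _ (hφbd (S0 ω))))
    simpa using h
  have hν_le : ∀ u : Euc d, ‖u‖ = 1 → ν ≤ q u := by
    intro u hu
    rw [hν, lambdaMin]
    have hbdd : BddBelow (Set.range fun v : {v : Euc d // ‖v‖ = 1} =>
        (⟪(v : Euc d), featCov P φ S0 (v : Euc d)⟫ : ℝ)) := by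
      refine ⟨-‖featCov P φ S0‖, ?_⟩
      rintro r ⟨⟨v, hv⟩, rfl⟩
      have h1 := abs_real_inner_le_norm v (featCov P φ S0 v)
      have h2 := (featCov P φ S0).le_opNorm v
      simp only [hv, mul_one, one_mul] at h1 h2
      have h3 := neg_abs_le (⟪v, featCov P φ S0 v⟫ : ℝ)
      dsimp only
      nlinarith [abs_nonneg (⟪v, featCov P φ S0 v⟫ : ℝ)]
    have h := ciInf_le hbdd (⟨u, hu⟩ : {v : Euc d // ‖v‖ = 1})
    rwa [hq_eq u] at h
  have hq_scale : ∀ (c : ℝ) (u : Euc d), q (c • u) = c ^ 2 * q u := by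
    intro c u
    rw [hqdef]
    simp only
    rw [← integral_const_mul]
    refine integral_congr_ae (ae_of_all _ fun ω => ?_)
    show (⟪φ (S0 ω), c • u⟫ : ℝ) ^ 2 = c ^ 2 * (⟪φ (S0 ω), u⟫ : ℝ) ^ 2
    rw [real_inner_smul_right]
    ring
  have hq_lb : ∀ u : Euc d, ν * ‖u‖ ^ 2 ≤ q u := by
    intro u
    rcases eq_or_ne u 0 with rfl | hu
    · have h0 : q 0 = 0 := le_antisymm (by simpa using hq_ub 0) (hq_nonneg 0)
      simp [h0]
    · have hc : (0 : ℝ) < ‖u‖ := norm_pos_iff.mpr hu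
      have hu1 : ‖((‖u‖⁻¹ : ℝ) • u : Euc d)‖ = 1 := by
        rw [norm_smul, Real.norm_eq_abs, abs_inv, abs_of_pos hc]
        field_simp
      have h1 := hν_le _ hu1
      rw [hq_scale _ _] at h1
      have h3 := mul_le_mul_of_nonneg_right h1 (sq_nonneg ‖u‖)
      calc ν * ‖u‖ ^ 2 ≤ (‖u‖⁻¹ ^ 2 * q u) * ‖u‖ ^ 2 := h3
        _ = q u := by field_simp
  have hν1 : ν ≤ 1 := by
    have hu1 : ‖(EuclideanSpace.single (⟨0, hd⟩ : Fin d) (1 : ℝ) : Euc d)‖ = 1 := by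
      simp [EuclideanSpace.norm_single]
    have h := (hν_le _ hu1).trans (hq_ub _)
    rw [hu1] at h
    simpa using h
  have hy_q : ∀ u : Euc d, ∫ ω, (⟪φ (S1 ω), u⟫ : ℝ) ^ 2 ∂P = q u := by
    intro u
    have hgm : Measurable fun s => (⟪φ s, u⟫ : ℝ) ^ 2 :=
      (hφmeas.inner measurable_const).pow_const 2
    have h1 : ∫ ω, (⟪φ (S1 ω), u⟫ : ℝ) ^ 2 ∂P = ∫ s, (⟪φ s, u⟫ : ℝ) ^ 2 ∂μ := by
      rw [← hlaw1]
      exact (integral_map hS1.aemeasurable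
        (by rw [hlaw1]; exact hgm.aestronglyMeasurable)).symm
    have h0 : q u = ∫ s, (⟪φ s, u⟫ : ℝ) ^ 2 ∂μ := by
      rw [hqdef]
      simp only
      rw [← hlaw0]
      exact (integral_map hS0.aemeasurable
        (by rw [hlaw0]; exact hgm.aestronglyMeasurable)).symm
    rw [h1, h0]
  refine ⟨ae_of_all _ hAbd, ?_, ?_⟩
  · -- Part (ii)
    set Abar : Op d := ∫ ω, A ω ∂P with hAbar
    have hAbar_bd : ‖Abar‖ ≤ 1 + γ := by
      refine (norm_integral_le_integral_norm _).trans ?_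
      calc ∫ ω, ‖A ω‖ ∂P ≤ ∫ _ω, (1 + γ) ∂P := integral_mono hA_int.norm (integrable_const _) hAbd
        _ = 1 + γ := by simp
    set C : Op d := adjCLM d Abar with hC
    have hT1_sm : AEStronglyMeasurable (fun ω => (A ω).comp (adjCLM d (A ω))) P := by
      have hc : Continuous fun M : Op d => M.comp (adjCLM d M) :=
        continuous_id.clm_comp (adjCLM d).continuous
      apply hc.comp_aestronglyMeasurable hA_sm
    have hT1_bd : ∀ ω, ‖(A ω).comp (adjCLM d (A ω))‖ ≤ (1 + γ) ^ 2 := by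
      intro ω
      refine (ContinuousLinearMap.opNorm_comp_le _ _).trans ?_
      rw [norm_adjCLM]
      have h := hAbd ω
      nlinarith [norm_nonneg (A ω)]
    have hT1_int : Integrable (fun ω => (A ω).comp (adjCLM d (A ω))) P :=
      Integrable.mono' (integrable_const _) hT1_sm (ae_of_all _ hT1_bd)
    set L2 : Op d →L[ℝ] Op d :=
      (ContinuousLinearMap.compL ℝ (Euc d) (Euc d) (Euc d)).flip C with hL2def
    set L3 : Op d →L[ℝ] Op d :=
      (ContinuousLinearMap.compL ℝ (Euc d) (Euc d) (Euc d) Abar).comp (adjCLM d) with hL3def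
    have hL2 : ∀ M : Op d, L2 M = M.comp C := fun M => rfl
    have hL3 : ∀ M : Op d, L3 M = Abar.comp (adjCLM d M) := fun M => rfl
    have key : ∀ ω, (A ω - Abar).comp (ContinuousLinearMap.adjoint (A ω - Abar))
        = (A ω).comp (adjCLM d (A ω)) - L2 (A ω) - L3 (A ω) + Abar.comp C := by
      intro ω
      rw [show ContinuousLinearMap.adjoint (A ω - Abar) = adjCLM d (A ω) - C from
        map_sub (adjCLM d) _ _]
      rw [hL2, hL3]
      simp only [ContinuousLinearMap.sub_comp, ContinuousLinearMap.comp_sub]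
      abel
    have i2 : Integrable (fun ω => L2 (A ω)) P := L2.integrable_comp hA_int
    have i3 : Integrable (fun ω => L3 (A ω)) P := L3.integrable_comp hA_int
    have ia1 : Integrable (fun ω => (A ω).comp (adjCLM d (A ω)) - L2 (A ω)) P :=
      hT1_int.sub i2
    have ia2 : Integrable (fun ω => (A ω).comp (adjCLM d (A ω)) - L2 (A ω) - L3 (A ω)) P :=
      ia1.sub i3
    have hintegral : (∫ ω, (A ω - Abar).comp (ContinuousLinearMap.adjoint (A ω - Abar)) ∂P)
        = (∫ ω, (A ω).comp (adjCLM d (A ω)) ∂P) - Abar.comp C := by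
      rw [integral_congr_ae (ae_of_all _ key)]
      rw [integral_add ia2 (integrable_const _),
        integral_sub ia1 i3, integral_sub hT1_int i2,
        L2.integral_comp_comm hA_int, L3.integral_comp_comm hA_int, integral_const]
      simp only [measure_univ, ENNReal.toReal_one, one_smul, probReal_univ]
      rw [hL2, hL3, ← hAbar, ← hC]
      abel
    rw [hintegral]
    have hn1 : ‖∫ ω, (A ω).comp (adjCLM d (A ω)) ∂P‖ ≤ (1 + γ) ^ 2 := by
      refine (norm_integral_le_integral_norm _).trans ?_
      calc ∫ ω, ‖(A ω).comp (adjCLM d (A ω))‖ ∂P ≤ ∫ _ω, (1 + γ) ^ 2 ∂P :=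
            integral_mono hT1_int.norm (integrable_const _) hT1_bd
        _ = (1 + γ) ^ 2 := by simp
    have hn2 : ‖Abar.comp C‖ ≤ (1 + γ) ^ 2 := by
      refine (ContinuousLinearMap.opNorm_comp_le _ _).trans ?_
      rw [hC, norm_adjCLM]
      nlinarith [norm_nonneg Abar]
    calc ‖(∫ ω, (A ω).comp (adjCLM d (A ω)) ∂P) - Abar.comp C‖
        ≤ ‖∫ ω, (A ω).comp (adjCLM d (A ω)) ∂P‖ + ‖Abar.comp C‖ := norm_sub_le _ _
      _ ≤ 2 * (1 + γ) ^ 2 := by linarith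
  · -- Part (iii)
    rintro η ⟨hη0, hη4⟩ u
    set X : Ω → ℝ := fun ω => ⟪φ (S0 ω), u⟫ with hXdef
    set Y : Ω → ℝ := fun ω => ⟪φ (S1 ω), u⟫ with hYdef
    have hXbd : ∀ ω, |X ω| ≤ ‖u‖ := fun ω => hxbd u _ (hφbd (S0 ω))
    have hYbd : ∀ ω, |Y ω| ≤ ‖u‖ := fun ω => hxbd u _ (hφbd (S1 ω))
    have hAu : ∀ ω, A ω u = (X ω - γ * Y ω) • φ (S0 ω) := by
      intro ω
      show outer2 (φ (S0 ω)) (φ (S0 ω) - γ • φ (S1 ω)) u = _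
      rw [outer2_apply, inner_sub_left, real_inner_smul_left]
    have key : ∀ ω, ‖((1 : Op d) - η • A ω) u‖ ^ 2
        = ‖u‖ ^ 2 - 2 * η * ((X ω - γ * Y ω) * X ω)
          + η ^ 2 * ((X ω - γ * Y ω) ^ 2 * ‖φ (S0 ω)‖ ^ 2) := by
      intro ω
      have h1 : ((1 : Op d) - η • A ω) u = u - (η * (X ω - γ * Y ω)) • φ (S0 ω) := by
        rw [ContinuousLinearMap.sub_apply, ContinuousLinearMap.smul_apply,
          ContinuousLinearMap.one_apply, hAu ω, smul_smul]
      rw [h1, norm_sub_sq_real, real_inner_smul_right, norm_smul, Real.norm_eq_abs,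
        mul_pow, sq_abs]
      have h2 : (⟪u, φ (S0 ω)⟫ : ℝ) = X ω := real_inner_comm _ _
      rw [h2]
      ring
    have hXY_sm : AEStronglyMeasurable (fun ω => (X ω - γ * Y ω) * X ω) P :=
      (((hx_sm u).sub ((hy_sm u).const_mul γ)).mul (hx_sm u))
    have hXY_int : Integrable (fun ω => (X ω - γ * Y ω) * X ω) P := by
      refine Integrable.mono' (integrable_const ((1 + γ) * ‖u‖ * ‖u‖)) hXY_sm
        (ae_of_all _ fun ω => ?_)
      rw [Real.norm_eq_abs, abs_mul]
      have h1 : |X ω - γ * Y ω| ≤ (1 + γ) * ‖u‖ := by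
        refine (abs_sub _ _).trans ?_
        rw [abs_mul, abs_of_pos hγ0]
        nlinarith [hXbd ω, hYbd ω]
      nlinarith [abs_nonneg (X ω), abs_nonneg (X ω - γ * Y ω), hXbd ω, norm_nonneg u,
        abs_nonneg (Y ω)]
    have hxy_int : Integrable (fun ω => X ω * Y ω) P := by
      refine Integrable.mono' (integrable_const (‖u‖ * ‖u‖)) ((hx_sm u).mul (hy_sm u))
        (ae_of_all _ fun ω => ?_)
      rw [Real.norm_eq_abs, abs_mul]
      nlinarith [abs_nonneg (X ω), abs_nonneg (Y ω), hXbd ω, hYbd ω, norm_nonneg u]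
    have hc2_sm : AEStronglyMeasurable
        (fun ω => (X ω - γ * Y ω) ^ 2 * ‖φ (S0 ω)‖ ^ 2) P :=
      ((((hx_sm u).sub ((hy_sm u).const_mul γ)).pow 2).mul
        (((hφmeas.comp hS0).norm.pow_const 2).aestronglyMeasurable))
    have hc2_int : Integrable (fun ω => (X ω - γ * Y ω) ^ 2 * ‖φ (S0 ω)‖ ^ 2) P := by
      refine Integrable.mono' (integrable_const (((1 + γ) * ‖u‖) ^ 2)) hc2_sm
        (ae_of_all _ fun ω => ?_)
      have h1 : |X ω - γ * Y ω| ≤ (1 + γ) * ‖u‖ := by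
        refine (abs_sub _ _).trans ?_
        rw [abs_mul, abs_of_pos hγ0]
        nlinarith [hXbd ω, hYbd ω]
      have h2 : (X ω - γ * Y ω) ^ 2 ≤ ((1 + γ) * ‖u‖) ^ 2 := habs2 _ _ h1
      have h3 : ‖φ (S0 ω)‖ ^ 2 ≤ 1 := by
        have := hφbd (S0 ω); nlinarith [norm_nonneg (φ (S0 ω))]
      rw [Real.norm_eq_abs, abs_mul, abs_of_nonneg (sq_nonneg (X ω - γ * Y ω)),
        abs_of_nonneg (sq_nonneg ‖φ (S0 ω)‖)]
      nlinarith [sq_nonneg (X ω - γ * Y ω), sq_nonneg ‖φ (S0 ω)‖]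
    have hX2_int : Integrable (fun ω => X ω ^ 2) P := hx2_int u
    have hY2_int : Integrable (fun ω => Y ω ^ 2) P := hy2_int u
    have hqu : ∫ ω, X ω ^ 2 ∂P = q u := rfl
    have hqy : ∫ ω, Y ω ^ 2 ∂P = q u := hy_q u
    have hsplit : ∫ ω, ‖((1 : Op d) - η • A ω) u‖ ^ 2 ∂P
        = ‖u‖ ^ 2 - 2 * η * (∫ ω, (X ω - γ * Y ω) * X ω ∂P)
          + η ^ 2 * ∫ ω, (X ω - γ * Y ω) ^ 2 * ‖φ (S0 ω)‖ ^ 2 ∂P := by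
      have hb2 : Integrable (fun ω => 2 * η * ((X ω - γ * Y ω) * X ω)) P :=
        hXY_int.const_mul _
      have hb3 : Integrable (fun ω => η ^ 2 * ((X ω - γ * Y ω) ^ 2 * ‖φ (S0 ω)‖ ^ 2)) P :=
        hc2_int.const_mul _
      have hb1 : Integrable (fun ω => ‖u‖ ^ 2 - 2 * η * ((X ω - γ * Y ω) * X ω)) P :=
        (integrable_const _).sub hb2
      rw [integral_congr_ae (ae_of_all _ key)]
      rw [integral_add hb1 hb3, integral_sub (integrable_const _) hb2,
        integral_const_mul, integral_const_mul, integral_const]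
      simp [measure_univ]
    have hxy_le : ∫ ω, X ω * Y ω ∂P ≤ q u := by
      have hpt : ∀ ω, X ω * Y ω ≤ (X ω ^ 2 + Y ω ^ 2) / 2 := fun ω => by
        nlinarith [sq_nonneg (X ω - Y ω)]
      have hsum_int : Integrable (fun ω => (X ω ^ 2 + Y ω ^ 2) / 2) P :=
        (hX2_int.add hY2_int).div_const 2
      have h := integral_mono hxy_int hsum_int hpt
      rw [integral_div, integral_add hX2_int hY2_int, hqu, hqy] at h
      linarith
    have hcx_ge : (1 - γ) * q u ≤ ∫ ω, (X ω - γ * Y ω) * X ω ∂P := by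
      have hid : ∀ ω, (X ω - γ * Y ω) * X ω = X ω ^ 2 - γ * (X ω * Y ω) := fun ω => by ring
      have hxyc_int : Integrable (fun ω => γ * (X ω * Y ω)) P := hxy_int.const_mul γ
      rw [integral_congr_ae (ae_of_all _ hid),
        integral_sub hX2_int hxyc_int, integral_const_mul, hqu]
      have h := mul_le_mul_of_nonneg_left hxy_le hγ0.le
      linarith
    have hc2_le : ∫ ω, (X ω - γ * Y ω) ^ 2 * ‖φ (S0 ω)‖ ^ 2 ∂P ≤ (1 + γ) ^ 2 * q u := by
      have hpt : ∀ ω, (X ω - γ * Y ω) ^ 2 * ‖φ (S0 ω)‖ ^ 2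
          ≤ (1 + γ) * (X ω ^ 2 + γ * Y ω ^ 2) := by
        intro ω
        have h3 : ‖φ (S0 ω)‖ ^ 2 ≤ 1 := by
          have := hφbd (S0 ω); nlinarith [norm_nonneg (φ (S0 ω))]
        have h2 : (X ω - γ * Y ω) ^ 2 ≤ (1 + γ) * (X ω ^ 2 + γ * Y ω ^ 2) := by
          nlinarith [sq_nonneg (X ω + Y ω)]
        nlinarith [sq_nonneg (X ω - γ * Y ω), sq_nonneg ‖φ (S0 ω)‖]
      have hy2c_int : Integrable (fun ω => γ * Y ω ^ 2) P := hY2_int.const_mul γ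
      have hmaj_int : Integrable (fun ω => (1 + γ) * (X ω ^ 2 + γ * Y ω ^ 2)) P :=
        (hX2_int.add hy2c_int).const_mul (1 + γ)
      have h := integral_mono hc2_int hmaj_int hpt
      rw [integral_const_mul, integral_add hX2_int hy2c_int,
        integral_const_mul, hqu, hqy] at h
      nlinarith [hq_nonneg u]
    have hband : η * (1 + γ) ^ 2 ≤ 1 - γ := by
      nlinarith [mul_le_mul_of_nonneg_right hη4 (sq_nonneg (1 + γ)),
        mul_nonneg (by linarith : (0:ℝ) ≤ 1 - γ) (by nlinarith : (0:ℝ) ≤ 4 - (1 + γ) ^ 2)]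
    have hquad : ∫ ω, ‖((1 : Op d) - η • A ω) u‖ ^ 2 ∂P
        ≤ (1 - η * (1 - γ) * ν) * ‖u‖ ^ 2 := by
      rw [hsplit]
      set I1 := ∫ ω, (X ω - γ * Y ω) * X ω ∂P
      set I2 := ∫ ω, (X ω - γ * Y ω) ^ 2 * ‖φ (S0 ω)‖ ^ 2 ∂P
      have e1 : η ^ 2 * I2 ≤ η * (1 - γ) * q u := by
        calc η ^ 2 * I2 ≤ η ^ 2 * ((1 + γ) ^ 2 * q u) :=
              mul_le_mul_of_nonneg_left hc2_le (sq_nonneg η)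
          _ = (η * (1 + γ) ^ 2) * (η * q u) := by ring
          _ ≤ (1 - γ) * (η * q u) :=
              mul_le_mul_of_nonneg_right hband (mul_nonneg hη0.le (hq_nonneg u))
          _ = η * (1 - γ) * q u := by ring
      have e2 : η * (1 - γ) * (ν * ‖u‖ ^ 2) ≤ η * (1 - γ) * q u :=
        mul_le_mul_of_nonneg_left (hq_lb u) (by nlinarith)
      have e3 : 2 * η * ((1 - γ) * q u) ≤ 2 * η * I1 :=
        mul_le_mul_of_nonneg_left hcx_ge (by nlinarith)
      nlinarith
    have ht1 : η * (1 - γ) * ν ≤ 1 := by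
      nlinarith [mul_le_mul_of_nonneg_right hη4 (mul_nonneg (by linarith : (0:ℝ) ≤ 1 - γ) hνpos.le)]
    have hrhs0 : (0 : ℝ) ≤ 1 - η * (1 - γ) * ν / 2 := by nlinarith
    have hfin : ∫ ω, ‖((1 : Op d) - η • A ω) u‖ ^ 2 ∂P
        ≤ ((1 - η * (1 - γ) * ν / 2) * ‖u‖) ^ 2 := by
      refine hquad.trans ?_
      have h : (1 - η * (1 - γ) * ν) ≤ (1 - η * (1 - γ) * ν / 2) ^ 2 := by
        nlinarith [sq_nonneg (η * (1 - γ) * ν)]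
      nlinarith [sq_nonneg ‖u‖]
    calc Real.sqrt (∫ ω, ‖((1 : Op d) - η • A ω) u‖ ^ 2 ∂P)
        ≤ Real.sqrt (((1 - η * (1 - γ) * ν / 2) * ‖u‖) ^ 2) := Real.sqrt_le_sqrt hfin
      _ = (1 - η * (1 - γ) * ν / 2) * ‖u‖ :=
          Real.sqrt_sq (mul_nonneg hrhs0 (norm_nonneg u))

end
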